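/- Fix δ > 0 and define f₀(z) = (15/4)·cos z·sin² z − (sin⁴ z)/(4·cos z) for cos z ≠ 0. Let D : ℂ → ℂ and let η : ℝ → ℝ satisfy η(t) → 0 as t → +∞, and suppose that |D(z) − f₀(z)| ≤ η(|z|)·e^{3·|Im z|} for every z ∈ ℂ with |z − (2k+1)π/2| ≥ δ for all k ∈ ℤ. Then there exists C > 0 such that D(z) ≠ 0 for every z ∈ ℂ satisfying: |z| ≥ C; |z − (2k+1)π/2| ≥ δ for all k ∈ ℤ; |z − kπ| ≥ δ for all k ∈ ℤ; and |z − w| ≥ δ for every real w with cos w = 1/4 or cos w = −1/4. -/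

import Mathlib

open Complex Filter

noncomputable def f0 (z : ℂ) : ℂ :=
  (15 / 4) * Complex.cos z * Complex.sin z ^ 2 - Complex.sin z ^ 4 / (4 * Complex.cos z)

lemma sin_decomp (z : ℂ) : Complex.sin z =
    ((Real.sin z.re * Real.cosh z.im : ℝ) : ℂ) + ((Real.cos z.re * Real.sinh z.im : ℝ) : ℂ) * I := by
  rw [Complex.sin_eq]; push_cast; ring

lemma cos_decomp (z : ℂ) : Complex.cos z =
    ((Real.cos z.re * Real.cosh z.im : ℝ) : ℂ) - ((Real.sin z.re * Real.sinh z.im : ℝ) : ℂ) * I := by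
  rw [Complex.cos_eq]; push_cast; ring

lemma abs_sin_sq (z : ℂ) : ‖Complex.sin z‖ ^ 2 =
    (Real.sin z.re * Real.cosh z.im) ^ 2 + (Real.cos z.re * Real.sinh z.im) ^ 2 := by
  rw [Complex.sq_norm, Complex.normSq_apply, sin_decomp z]
  simp [Complex.sin_ofReal_re, Complex.cos_ofReal_re, Complex.sinh_ofReal_re,
    Complex.cosh_ofReal_re]
  ring

lemma abs_cos_sq (z : ℂ) : ‖Complex.cos z‖ ^ 2 =
    (Real.cos z.re * Real.cosh z.im) ^ 2 + (Real.sin z.re * Real.sinh z.im) ^ 2 := by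
  rw [Complex.sq_norm, Complex.normSq_apply, cos_decomp z]
  simp [Complex.sin_ofReal_re, Complex.cos_ofReal_re, Complex.sinh_ofReal_re,
    Complex.cosh_ofReal_re]
  ring

lemma sinh_le_abs_sin (z : ℂ) : |Real.sinh z.im| ≤ ‖Complex.sin z‖ := by
  have h := abs_sin_sq z
  have hp := Real.sin_sq_add_cos_sq z.re
  have hc := Real.cosh_sq z.im
  have h1 : Real.sinh z.im ^ 2 ≤ ‖Complex.sin z‖ ^ 2 := by
    nlinarith [sq_nonneg (Real.sin z.re)]
  nlinarith [norm_nonneg (Complex.sin z), abs_nonneg (Real.sinh z.im),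
    _root_.sq_abs (Real.sinh z.im)]

lemma sinh_le_abs_cos (z : ℂ) : |Real.sinh z.im| ≤ ‖Complex.cos z‖ := by
  have h := abs_cos_sq z
  have hp := Real.sin_sq_add_cos_sq z.re
  have hc := Real.cosh_sq z.im
  have h1 : Real.sinh z.im ^ 2 ≤ ‖Complex.cos z‖ ^ 2 := by
    nlinarith [sq_nonneg (Real.cos z.re)]
  nlinarith [norm_nonneg (Complex.cos z), abs_nonneg (Real.sinh z.im),
    _root_.sq_abs (Real.sinh z.im)]

lemma abs_cos_le_cosh (z : ℂ) : ‖Complex.cos z‖ ≤ Real.cosh z.im := by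
  have h := abs_cos_sq z
  have hp := Real.sin_sq_add_cos_sq z.re
  have hc := Real.cosh_sq z.im
  have h1 : ‖Complex.cos z‖ ^ 2 ≤ Real.cosh z.im ^ 2 := by
    nlinarith [sq_nonneg (Real.sin z.re), Real.sinh_sq z.im]
  nlinarith [norm_nonneg (Complex.cos z), Real.cosh_pos z.im]

lemma f0_eq (z : ℂ) (h : Complex.cos z ≠ 0) :
    f0 z = Complex.sin z ^ 2 * (16 * Complex.cos z ^ 2 - 1) / (4 * Complex.cos z) := by
  have hp := Complex.sin_sq_add_cos_sq z
  rw [f0, eq_div_iff (mul_ne_zero (by norm_num : (4 : ℂ) ≠ 0) h), sub_mul,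
    div_mul_cancel₀ _ (mul_ne_zero (by norm_num : (4 : ℂ) ≠ 0) h)]
  linear_combination (-Complex.sin z ^ 2) * hp

lemma cos_ne_zero_of_cond {δ : ℝ} (hδ : 0 < δ) {z : ℂ}
    (h : ∀ k : ℤ, δ ≤ ‖z - ((2 * (k : ℂ) + 1) * Real.pi / 2)‖) :
    Complex.cos z ≠ 0 := by
  intro h0
  obtain ⟨k, hk⟩ := Complex.cos_eq_zero_iff.1 h0
  have hzk := h k
  rw [hk, sub_self] at hzk
  simp at hzk
  linarith

lemma cos_quarter_real {z : ℂ}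
    (h : Complex.cos z = 1 / 4 ∨ Complex.cos z = -(1 / 4)) :
    ∃ w : ℝ, (Real.cos w = 1 / 4 ∨ Real.cos w = -(1 / 4)) ∧ z = (w : ℂ) := by
  obtain ⟨a, ha, hz⟩ : ∃ a : ℝ, (a = 1 / 4 ∨ a = -(1 / 4)) ∧ Complex.cos z = (a : ℂ) := by
    rcases h with h | h
    · exact ⟨1 / 4, Or.inl rfl, by rw [h]; norm_num⟩
    · exact ⟨-(1 / 4), Or.inr rfl, by rw [h]; norm_num⟩
  rw [Complex.cos_eq] at hz
  have hre : Real.cos z.re * Real.cosh z.im = a := by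
    have := congrArg Complex.re hz
    simpa [Complex.cos_ofReal_re, Complex.cosh_ofReal_re, Complex.sin_ofReal_im,
      Complex.cos_ofReal_im, Complex.sinh_ofReal_im, Complex.sin_ofReal_re,
      Complex.sinh_ofReal_re, Complex.cosh_ofReal_im] using this
  have him : Real.sin z.re * Real.sinh z.im = 0 := by
    have := congrArg Complex.im hz
    simpa [Complex.cos_ofReal_re, Complex.cosh_ofReal_re, Complex.sin_ofReal_im,
      Complex.cos_ofReal_im, Complex.sinh_ofReal_im, Complex.sin_ofReal_re,
      Complex.sinh_ofReal_re, Complex.cosh_ofReal_im] using this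
  have haa : |a| = 1 / 4 := by rcases ha with rfl | rfl <;> norm_num
  have hy0 : z.im = 0 := by
    rcases mul_eq_zero.1 him with hs | hs
    · exfalso
      have hpyth := Real.sin_sq_add_cos_sq z.re
      rw [hs] at hpyth
      have hch := Real.one_le_cosh z.im
      have hsq : (Real.cos z.re * Real.cosh z.im) ^ 2 = a ^ 2 := by rw [hre]
      have key : Real.cosh z.im ^ 2 = a ^ 2 := by
        linear_combination hsq - Real.cosh z.im ^ 2 * hpyth
      rcases ha with rfl | rfl <;> nlinarith [hch, key]
    · exact Real.sinh_eq_zero.1 hs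
  refine ⟨z.re, ?_, ?_⟩
  · rw [hy0, Real.cosh_zero, mul_one] at hre
    rcases ha with rfl | rfl
    · exact Or.inl hre
    · exact Or.inr hre
  · rw [← Complex.re_add_im z, hy0]
    simp

lemma exp_triple (y : ℝ) : Real.exp (3 * y) = Real.exp y ^ 3 := by
  rw [show (3 : ℝ) * y = y + (y + y) by ring, Real.exp_add, Real.exp_add]; ring

lemma big_im_bound {z : ℂ} (hy : 1 ≤ |z.im|) (hc : Complex.cos z ≠ 0) :
    Real.exp (3 * |z.im|) / 128 ≤ ‖f0 z‖ := by
  set s := ‖Complex.sin z‖ with hs_def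
  set c := ‖Complex.cos z‖ with hc_def
  set E := Real.exp |z.im| with hE_def
  have hEpos : 0 < E := Real.exp_pos _
  have hE2 : (2 : ℝ) ≤ E := by
    have h1 : Real.exp 1 ≤ E := Real.exp_le_exp.2 hy
    nlinarith [Real.add_one_le_exp 1]
  have hEinv : E * E⁻¹ = 1 := mul_inv_cancel₀ (ne_of_gt hEpos)
  have hEinvle : E⁻¹ ≤ 1 / 2 := by
    rw [show (1 : ℝ) / 2 = 2⁻¹ by norm_num]
    exact inv_anti₀ two_pos hE2
  have hsinh : Real.sinh |z.im| = (E - E⁻¹) / 2 := by rw [Real.sinh_eq, Real.exp_neg]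
  have hcosh : Real.cosh |z.im| = (E + E⁻¹) / 2 := by rw [Real.cosh_eq, Real.exp_neg]
  have hs1 : (E - E⁻¹) / 2 ≤ s := by
    rw [← hsinh, ← Real.abs_sinh]; exact sinh_le_abs_sin z
  have hc1 : (E - E⁻¹) / 2 ≤ c := by
    rw [← hsinh, ← Real.abs_sinh]; exact sinh_le_abs_cos z
  have hc2 : c ≤ (E + E⁻¹) / 2 := by
    have h := abs_cos_le_cosh z
    rwa [← Real.cosh_abs, hcosh] at h
  have hcpos : 0 < c := by linarith
  have hs38 : 3 * E / 8 ≤ s := by linarith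
  have hc38 : 3 * E / 8 ≤ c := by linarith
  have hcE : c ≤ E := by linarith
  set m := ‖16 * Complex.cos z ^ 2 - 1‖ with hm_def
  have habs : ‖f0 z‖ = s ^ 2 * m / (4 * c) := by
    rw [f0_eq z hc, norm_div, norm_mul, norm_pow, norm_mul]
    norm_num [hs_def, hc_def, hm_def]
  have hm : 16 * c ^ 2 - 1 ≤ m := by
    have h1 : ‖16 * Complex.cos z ^ 2‖ ≤ m + ‖(1 : ℂ)‖ := by
      calc ‖16 * Complex.cos z ^ 2‖
          = ‖(16 * Complex.cos z ^ 2 - 1) + 1‖ := by ring_nf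
        _ ≤ m + ‖(1 : ℂ)‖ := norm_add_le _ _
    have h2 : ‖16 * Complex.cos z ^ 2‖ = 16 * c ^ 2 := by
      rw [norm_mul, norm_pow]; norm_num [hc_def]
    rw [h2] at h1
    simp at h1
    linarith
  have hm2 : 2 * E ^ 2 ≤ m := by nlinarith [hm, hc38, hE2, hcpos, hEpos]
  rw [exp_triple, habs, div_le_div_iff₀ (by norm_num) (by positivity)]
  have hs2 : (3 * E / 8) ^ 2 ≤ s ^ 2 := by nlinarith [hs38, hEpos]
  have hfin : (3 * E / 8) ^ 2 * (2 * E ^ 2) ≤ s ^ 2 * m :=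
    mul_le_mul hs2 hm2 (by positivity) (by positivity)
  have hmul : E ^ 3 * c ≤ E ^ 3 * E := mul_le_mul_of_nonneg_left hcE (by positivity)
  nlinarith [hfin, hmul, hEpos]

lemma strip_bound (δ : ℝ) (hδ : 0 < δ) :
    ∃ c : ℝ, 0 < c ∧ ∀ z : ℂ, |z.im| ≤ 1 →
      (∀ k : ℤ, δ ≤ ‖z - ((2 * (k : ℂ) + 1) * Real.pi / 2)‖) →
      (∀ k : ℤ, δ ≤ ‖z - (k : ℂ) * Real.pi‖) →
      (∀ w : ℝ, (Real.cos w = 1 / 4 ∨ Real.cos w = -(1 / 4)) →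
        δ ≤ ‖z - (w : ℂ)‖) →
      c ≤ ‖f0 z‖ := by
  set K : Set ℂ :=
      {z : ℂ | |z.im| ≤ 1} ∩ (Complex.re ⁻¹' Set.Icc 0 (2 * Real.pi)) ∩
      (⋂ k : ℤ, {z : ℂ | δ ≤ ‖z - ((2 * (k : ℂ) + 1) * Real.pi / 2)‖}) ∩
      (⋂ k : ℤ, {z : ℂ | δ ≤ ‖z - (k : ℂ) * Real.pi‖}) ∩
      (⋂ w : ℝ, {z : ℂ | (Real.cos w = 1 / 4 ∨ Real.cos w = -(1 / 4)) →
          δ ≤ ‖z - (w : ℂ)‖}) with hK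
  have hclosed : IsClosed K := by
    refine (((IsClosed.inter ?_ ?_).inter ?_).inter ?_).inter ?_
    · exact isClosed_le (continuous_abs.comp Complex.continuous_im) continuous_const
    · exact isClosed_Icc.preimage Complex.continuous_re
    · exact isClosed_iInter fun k => isClosed_le continuous_const
        (continuous_norm.comp (continuous_id.sub continuous_const))
    · exact isClosed_iInter fun k => isClosed_le continuous_const
        (continuous_norm.comp (continuous_id.sub continuous_const))
    · refine isClosed_iInter fun w => ?_
      by_cases hw : (Real.cos w = 1 / 4 ∨ Real.cos w = -(1 / 4))
      · have h : {z : ℂ | (Real.cos w = 1 / 4 ∨ Real.cos w = -(1 / 4)) →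
            δ ≤ ‖z - (w : ℂ)‖} = {z : ℂ | δ ≤ ‖z - (w : ℂ)‖} := by
          ext x
          exact ⟨fun h => h hw, fun h _ => h⟩
        rw [h]
        exact isClosed_le continuous_const
          (continuous_norm.comp (continuous_id.sub continuous_const))
      · have h : {z : ℂ | (Real.cos w = 1 / 4 ∨ Real.cos w = -(1 / 4)) →
            δ ≤ ‖z - (w : ℂ)‖} = Set.univ := by
          ext x
          simp only [Set.mem_setOf_eq, Set.mem_univ, iff_true]
          exact fun h => absurd h hw
        rw [h]; exact isClosed_univ
  have hbdd : K ⊆ Metric.closedBall 0 (2 * Real.pi + 1) := by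
    rintro z ⟨⟨⟨⟨h1, h2⟩, -⟩, -⟩, -⟩
    rw [Metric.mem_closedBall, Complex.dist_eq, sub_zero]
    have h1' : |z.im| ≤ 1 := h1
    have h3 := Complex.norm_le_abs_re_add_abs_im z
    obtain ⟨h2a, h2b⟩ := h2
    have h4 : |z.re| ≤ 2 * Real.pi := abs_le.2 ⟨by linarith, h2b⟩
    linarith
  have hcompact : IsCompact K :=
    (isCompact_closedBall 0 _).of_isClosed_subset hclosed hbdd
  have hcont : ContinuousOn f0 K := by
    have h4 : ∀ z ∈ K, (4 : ℂ) * Complex.cos z ≠ 0 := by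
      rintro z ⟨⟨⟨⟨-, -⟩, h3⟩, -⟩, -⟩
      have hc := cos_ne_zero_of_cond hδ (fun k => Set.mem_iInter.1 h3 k)
      simpa using hc
    exact (((continuous_const.mul Complex.continuous_cos).mul
        (Complex.continuous_sin.pow 2)).continuousOn).sub
      (ContinuousOn.div ((Complex.continuous_sin.pow 4).continuousOn)
        ((continuous_const.mul Complex.continuous_cos).continuousOn) h4)
  have hne : ∀ z ∈ K, f0 z ≠ 0 := by
    rintro z ⟨⟨⟨⟨h1, h2⟩, h3⟩, h4⟩, h5⟩ h0
    have hc := cos_ne_zero_of_cond hδ (fun k => Set.mem_iInter.1 h3 k)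
    rw [f0_eq z hc] at h0
    rcases div_eq_zero_iff.1 h0 with h0 | h0
    · rcases mul_eq_zero.1 h0 with h0 | h0
      · have hs0 : Complex.sin z = 0 := by
          exact pow_eq_zero_iff (by norm_num) |>.1 h0
        obtain ⟨k, hk⟩ := Complex.sin_eq_zero_iff.1 hs0
        have hmem : δ ≤ ‖z - (k : ℂ) * Real.pi‖ := Set.mem_iInter.1 h4 k
        rw [hk, sub_self] at hmem
        simp at hmem
        linarith
      · have hcq : Complex.cos z = 1 / 4 ∨ Complex.cos z = -(1 / 4) := by
          have h16 : (4 * Complex.cos z - 1) * (4 * Complex.cos z + 1) = 0 := by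
            linear_combination h0
          rcases mul_eq_zero.1 h16 with h | h
          · left; linear_combination h / 4
          · right; linear_combination h / 4
        obtain ⟨w, hw, hzw⟩ := cos_quarter_real hcq
        have hmem : δ ≤ ‖z - (w : ℂ)‖ := Set.mem_iInter.1 h5 w hw
        rw [hzw, sub_self] at hmem
        simp at hmem
        linarith
    · rcases mul_eq_zero.1 h0 with h0 | h0
      · norm_num at h0
      · exact hc h0
  have htrans : ∀ z : ℂ, |z.im| ≤ 1 →
      (∀ k : ℤ, δ ≤ ‖z - ((2 * (k : ℂ) + 1) * Real.pi / 2)‖) →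
      (∀ k : ℤ, δ ≤ ‖z - (k : ℂ) * Real.pi‖) →
      (∀ w : ℝ, (Real.cos w = 1 / 4 ∨ Real.cos w = -(1 / 4)) →
        δ ≤ ‖z - (w : ℂ)‖) →
      ∃ z' ∈ K, ‖f0 z'‖ = ‖f0 z‖ := by
    intro z h1 hC1 hC2 hC3
    have hpi := Real.pi_pos
    have h2pi : (0 : ℝ) < 2 * Real.pi := by linarith
    set n : ℤ := ⌊z.re / (2 * Real.pi)⌋ with hn
    refine ⟨z - (n : ℂ) * (2 * (Real.pi : ℂ)), ?_, ?_⟩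
    · refine ⟨⟨⟨⟨?_, ?_⟩, ?_⟩, ?_⟩, ?_⟩
      · show |(z - (n : ℂ) * (2 * (Real.pi : ℂ))).im| ≤ 1
        simpa using h1
      · have hre : (z - (n : ℂ) * (2 * (Real.pi : ℂ))).re = z.re - n * (2 * Real.pi) := by
          simp
        refine Set.mem_preimage.2 ⟨?_, ?_⟩ <;> rw [hre]
        · have := (le_div_iff₀ h2pi).1 (Int.floor_le (z.re / (2 * Real.pi)))
          linarith
        · have := (div_lt_iff₀ h2pi).1 (Int.lt_floor_add_one (z.re / (2 * Real.pi)))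
          push_cast at this
          linarith
      · rw [Set.mem_iInter]; intro k
        have h := hC1 (k + 2 * n)
        have heq : z - ((2 * ((k + 2 * n : ℤ) : ℂ) + 1) * Real.pi / 2) =
            (z - (n : ℂ) * (2 * (Real.pi : ℂ))) - ((2 * (k : ℂ) + 1) * Real.pi / 2) := by
          push_cast; ring
        rw [heq] at h; exact h
      · rw [Set.mem_iInter]; intro k
        have h := hC2 (k + 2 * n)
        have heq : z - ((k + 2 * n : ℤ) : ℂ) * Real.pi =
            (z - (n : ℂ) * (2 * (Real.pi : ℂ))) - (k : ℂ) * Real.pi := by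
          push_cast; ring
        rw [heq] at h; exact h
      · rw [Set.mem_iInter]; intro w
        intro hw
        have hw' : Real.cos (w + n * (2 * Real.pi)) = 1 / 4 ∨
            Real.cos (w + n * (2 * Real.pi)) = -(1 / 4) := by
          rw [Real.cos_add_int_mul_two_pi]; exact hw
        have h := hC3 (w + n * (2 * Real.pi)) hw'
        have heq : z - ((w + n * (2 * Real.pi) : ℝ) : ℂ) =
            (z - (n : ℂ) * (2 * (Real.pi : ℂ))) - (w : ℂ) := by
          push_cast; ring
        rw [heq] at h; exact h
    · have hf : f0 (z - (n : ℂ) * (2 * (Real.pi : ℂ))) = f0 z := by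
        unfold f0
        rw [Complex.sin_sub_int_mul_two_pi, Complex.cos_sub_int_mul_two_pi]
      rw [hf]
  rcases K.eq_empty_or_nonempty with hKe | hKne
  · refine ⟨1, one_pos, ?_⟩
    intro z h1 hC1 hC2 hC3
    obtain ⟨z', hz', -⟩ := htrans z h1 hC1 hC2 hC3
    rw [hKe] at hz'
    exact absurd hz' (Set.notMem_empty _)
  · obtain ⟨z₀, hz₀, hmin⟩ := hcompact.exists_isMinOn hKne
      (continuous_norm.comp_continuousOn hcont)
    refine ⟨‖f0 z₀‖, norm_pos_iff.2 (hne z₀ hz₀), ?_⟩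
    intro z h1 hC1 hC2 hC3
    obtain ⟨z', hz', heq⟩ := htrans z h1 hC1 hC2 hC3
    rw [← heq]
    exact hmin hz'

/-- Unique solvability (Proposition 1): if `D` approximates
`f₀(z) = (15/4)·cos z·sin² z − sin⁴ z/(4 cos z)` up to `o(e^{3|Im z|})` in the
region `G_δ`, then `D` has no zeros of large modulus away from δ-neighborhoods
of the zeros of `f₀`. -/
theorem stmt_6 (δ : ℝ) (hδ : 0 < δ) (D : ℂ → ℂ) (η : ℝ → ℝ)
    (hη : Tendsto η atTop (nhds 0))
    (hD : ∀ z : ℂ,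
      (∀ k : ℤ, δ ≤ ‖z - ((2 * (k : ℂ) + 1) * Real.pi / 2)‖) →
      ‖D z - ((15 / 4) * Complex.cos z * Complex.sin z ^ 2
          - Complex.sin z ^ 4 / (4 * Complex.cos z))‖ ≤
        η (‖z‖) * Real.exp (3 * |z.im|)) :
    ∃ C : ℝ, 0 < C ∧
      ∀ z : ℂ, C ≤ ‖z‖ →
        (∀ k : ℤ, δ ≤ ‖z - ((2 * (k : ℂ) + 1) * Real.pi / 2)‖) →
        (∀ k : ℤ, δ ≤ ‖z - (k : ℂ) * Real.pi‖) →
        (∀ w : ℝ, (Real.cos w = 1 / 4 ∨ Real.cos w = -(1 / 4)) →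
          δ ≤ ‖z - (w : ℂ)‖) →
        D z ≠ 0 := by
  obtain ⟨c₁, hc₁, hstrip⟩ := strip_bound δ hδ
  set c : ℝ := min (c₁ * Real.exp (-3)) (1 / 128) with hc_def
  have hcpos : 0 < c := lt_min (by positivity) (by norm_num)
  have hlow : ∀ z : ℂ,
      (∀ k : ℤ, δ ≤ ‖z - ((2 * (k : ℂ) + 1) * Real.pi / 2)‖) →
      (∀ k : ℤ, δ ≤ ‖z - (k : ℂ) * Real.pi‖) →
      (∀ w : ℝ, (Real.cos w = 1 / 4 ∨ Real.cos w = -(1 / 4)) →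
        δ ≤ ‖z - (w : ℂ)‖) →
      c * Real.exp (3 * |z.im|) ≤ ‖f0 z‖ := by
    intro z hC1 hC2 hC3
    by_cases hy : |z.im| ≤ 1
    · have h1 := hstrip z hy hC1 hC2 hC3
      have h2 : c * Real.exp (3 * |z.im|) ≤ (c₁ * Real.exp (-3)) * Real.exp (3 * |z.im|) :=
        mul_le_mul_of_nonneg_right (min_le_left _ _) (Real.exp_pos _).le
      have h3 : (c₁ * Real.exp (-3)) * Real.exp (3 * |z.im|)
          = c₁ * Real.exp (-3 + 3 * |z.im|) := by
        rw [mul_assoc, ← Real.exp_add]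
      have h4 : Real.exp (-3 + 3 * |z.im|) ≤ 1 := by
        have h := Real.exp_le_exp.2 (show -3 + 3 * |z.im| ≤ 0 by linarith)
        simpa using h
      have h5 : c₁ * Real.exp (-3 + 3 * |z.im|) ≤ c₁ := by nlinarith
      linarith [h3 ▸ h2]
    · push_neg at hy
      have hc0 := cos_ne_zero_of_cond hδ hC1
      have h1 := big_im_bound hy.le hc0
      have h3 : c * Real.exp (3 * |z.im|) ≤ (1 / 128) * Real.exp (3 * |z.im|) :=
        mul_le_mul_of_nonneg_right (min_le_right _ _) (Real.exp_pos _).le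
      linarith
  have hev : ∀ᶠ t in atTop, |η t| < c / 2 := by
    have h := Metric.tendsto_nhds.mp hη (c / 2) (by positivity)
    simpa [Real.dist_eq] using h
  obtain ⟨T, hT⟩ := eventually_atTop.1 hev
  refine ⟨max T 1, lt_of_lt_of_le one_pos (le_max_right _ _), ?_⟩
  intro z hzC hC1 hC2 hC3 hzero
  have hf0 : c * Real.exp (3 * |z.im|) ≤ ‖f0 z‖ := hlow z hC1 hC2 hC3
  have hDz := hD z hC1
  rw [hzero] at hDz
  have hDz' : ‖f0 z‖ ≤ η (‖z‖) * Real.exp (3 * |z.im|) := by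
    have heq : (0 : ℂ) - ((15 / 4) * Complex.cos z * Complex.sin z ^ 2
        - Complex.sin z ^ 4 / (4 * Complex.cos z)) = -(f0 z) := by rw [f0]; ring
    rw [heq, norm_neg] at hDz
    exact hDz
  have hηz : η (‖z‖) ≤ c / 2 := by
    have h1 := hT (‖z‖) (le_trans (le_max_left _ _) hzC)
    have h2 := le_abs_self (η (‖z‖))
    linarith
  have hepos := Real.exp_pos (3 * |z.im|)
  have h6 : η (‖z‖) * Real.exp (3 * |z.im|)
      ≤ (c / 2) * Real.exp (3 * |z.im|) :=
    mul_le_mul_of_nonneg_right hηz hepos.le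
  nlinarith [hf0, hDz', h6, hepos, hcpos]
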